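/- Averaging two adjacent column margins does not decrease the number of contingency tables: if b' is obtained from b = (b_1,...,b_n) by replacing (b_1,b_2) with (⌈(b_1+b_2)/2⌉, ⌊(b_1+b_2)/2⌋), then #M(a,b) ≤ #M(a,b'), where M(a,b) denotes the set of m×n nonnegative integer matrices with row sums a_1,...,a_m and column sums b_1,...,b_n. -/

import Mathlib

open Finset

/-- symmetric-unimodal about `s/2` (support thought of in `[0,s]`). -/
def SU (s : ℤ) (g : ℤ → ℕ) : Prop :=
  (∀ x, g x = g (s - x)) ∧ (∀ c : ℤ, 2*(c+1) ≤ s → g c ≤ g (c+1))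

lemma SU.mono {s : ℤ} {g : ℤ → ℕ} (h : SU s g) {x y : ℤ} (hxy : x ≤ y) (hy : 2*y ≤ s) :
    g x ≤ g y := by
  obtain ⟨k, rfl⟩ : ∃ k : ℕ, y = x + k := ⟨(y-x).toNat, by omega⟩
  clear hxy
  induction k with
  | zero => simp
  | succ k ih =>
    have h1 : g x ≤ g (x + k) := ih (by push_cast at hy ⊢; omega)
    have h2 : g (x + k) ≤ g (x + k + 1) := h.2 (x + k) (by push_cast at hy ⊢; omega)
    push_cast
    calc g x ≤ g (x + k) := h1
      _ ≤ _ := h2.trans_eq (by ring_nf)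

lemma SU.conv {s : ℤ} {g : ℤ → ℕ} (h : SU s g) (r : ℕ) :
    SU (s + r) (fun c => ∑ j ∈ Finset.range (r+1), g (c - j)) := by
  constructor
  · intro x
    simp only
    rw [← Finset.sum_range_reflect]
    refine Finset.sum_congr rfl fun j hj => ?_
    simp only [Finset.mem_range] at hj
    rw [h.1 (x - (r + 1 - 1 - j : ℕ))]
    congr 1
    push_cast
    omega
  · intro c hc
    simp only
    rw [Finset.sum_range_succ, Finset.sum_range_succ']
    have key : g (c - r) ≤ g (c + 1) := by
      rcases le_or_gt (2*(c+1)) s with h1 | h1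
      · exact h.mono (by omega) h1
      · rw [h.1 (c+1)]
        exact h.mono (by omega) (by omega)
    have hterm : ∀ j ∈ Finset.range r, g (c + 1 - ((j:ℕ)+1:ℕ)) = g (c - j) := by
      intro j hj; congr 1; push_cast; ring
    rw [Finset.sum_congr rfl hterm]
    gcongr
    exact key.trans_eq (by norm_num)

/-- number of `x ≤ r` (pointwise) with `∑ x = c`. -/
def cnt (k : ℕ) (r : Fin k → ℕ) (c : ℤ) : ℕ :=
  ((Finset.Icc (0 : Fin k → ℕ) r).filter (fun x => (∑ j, (x j : ℤ)) = c)).card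

lemma cnt_zero (r : Fin 0 → ℕ) (c : ℤ) : cnt 0 r c = if c = 0 then 1 else 0 := by
  unfold cnt
  rcases eq_or_ne c 0 with rfl | hc
  · rw [if_pos rfl, Finset.card_eq_one]
    refine ⟨0, ?_⟩
    ext x
    simp [Subsingleton.elim x 0]
  · rw [if_neg hc, Finset.card_eq_zero]
    ext x
    simp [Ne.symm hc]

lemma cnt_succ (k : ℕ) (r : Fin (k+1) → ℕ) (c : ℤ) :
    cnt (k+1) r c = ∑ j ∈ Finset.range (r 0 + 1), cnt k (fun i => r i.succ) (c - j) := by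
  classical
  unfold cnt
  rw [← Finset.card_sigma]
  apply Finset.card_nbij' (i := fun x => (⟨(x 0 : ℕ), Fin.tail x⟩ : Σ _ : ℕ, Fin k → ℕ))
    (j := fun p => Fin.cons p.1 p.2)
  · intro x hx
    simp only [Finset.mem_coe, Finset.mem_filter, Finset.mem_Icc, Pi.le_def] at hx
    obtain ⟨⟨h0, h1⟩, h2⟩ := hx
    simp only [Finset.mem_coe, Finset.mem_sigma, Finset.mem_range, Finset.mem_filter, Finset.mem_Icc, Pi.le_def]
    refine ⟨by have := h1 0; omega, ⟨fun i => h0 _, fun i => h1 _⟩, ?_⟩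
    rw [Fin.sum_univ_succ] at h2
    simp only [Fin.tail]
    omega
  · intro p hp
    simp only [Finset.mem_coe, Finset.mem_sigma, Finset.mem_range, Finset.mem_filter, Finset.mem_Icc,
      Pi.le_def] at hp
    obtain ⟨h0, ⟨h1, h2⟩, h3⟩ := hp
    simp only [Finset.mem_coe, Finset.mem_filter, Finset.mem_Icc, Pi.le_def]
    refine ⟨⟨fun i => ?_, fun i => ?_⟩, ?_⟩
    · induction i using Fin.cases <;> simp [h1]
    · induction i using Fin.cases with
      | zero => simpa using by omega
      | succ i => simpa using h2 i
    · rw [Fin.sum_univ_succ]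
      simp only [Fin.cons_zero, Fin.cons_succ]
      omega
  · intro x hx
    exact Fin.cons_self_tail x
  · intro p hp
    simp [Fin.tail]

lemma cnt_SU (k : ℕ) (r : Fin k → ℕ) : SU (∑ i, (r i : ℤ)) (cnt k r) := by
  induction k with
  | zero =>
    simp only [Finset.univ_eq_empty, Finset.sum_empty]
    constructor
    · intro x
      simp only [cnt_zero, zero_sub]
      by_cases h : x = 0 <;> simp [h] <;> omega
    · intro c hc
      simp only [cnt_zero]
      split <;> split <;> omega
  | succ k ih =>
    have h := (ih (fun i => r i.succ)).conv (r 0)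
    have hs : (∑ i : Fin k, ((r i.succ : ℕ) : ℤ)) + (r 0 : ℕ) = ∑ i, (r i : ℤ) := by
      rw [Fin.sum_univ_succ]; ring
    rw [hs] at h
    have : cnt (k+1) r = fun c => ∑ j ∈ Finset.range (r 0 + 1),
        cnt k (fun i => r i.succ) (c - j) := by
      funext c; exact cnt_succ k r c
    rw [this]
    exact h

lemma cnt_le_center (k : ℕ) (r : Fin k → ℕ) (c : ℕ) :
    cnt k r c ≤ cnt k r (((((∑ i, r i) + 1) / 2 : ℕ) : ℤ)) := by
  have h := cnt_SU k r
  set s : ℕ := ∑ i, r i with hs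
  have hcast : (∑ i, (r i : ℤ)) = (s : ℤ) := by push_cast [hs]; rfl
  rw [hcast] at h
  have hsym : cnt k r (((s+1)/2 : ℕ)) = cnt k r ((s/2 : ℕ)) := by
    rw [h.1]
    congr 1
    push_cast
    omega
  rcases le_or_gt (c : ℤ) ((s/2 : ℕ) : ℤ) with hc | hc
  · rw [hsym]
    exact h.mono hc (by push_cast; omega)
  · rw [hsym, h.1 (c : ℕ)]
    exact h.mono (by push_cast; omega) (by push_cast; omega)

/-- Averaging two adjacent column margins does not decrease the number of contingency
tables: if `b'` is obtained from `b = (b_1,...,b_n)` by replacing `(b_1, b_2)` with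
`(⌈(b_1+b_2)/2⌉, ⌊(b_1+b_2)/2⌋)`, then `#M(a,b) ≤ #M(a,b')`.  Here the columns are
indexed by `Fin (n+2)` (so there are at least two columns). -/
theorem averaging_columns (m n : ℕ) (a : Fin m → ℕ) (b : Fin (n + 2) → ℕ)
    (ha : ∀ i, 0 < a i) (hb : ∀ j, 0 < b j)
    (hsum : ∑ i, a i = ∑ j, b j)
    (b' : Fin (n + 2) → ℕ)
    (hb' : b' = fun j => if j = 0 then (b 0 + b 1 + 1) / 2
      else if j = 1 then (b 0 + b 1) / 2 else b j) :
    {M : Fin m → Fin (n + 2) → ℕ | (∀ i, ∑ j, M i j = a i) ∧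
        (∀ j, ∑ i, M i j = b j)}.ncard ≤
      {M : Fin m → Fin (n + 2) → ℕ | (∀ i, ∑ j, M i j = a i) ∧
        (∀ j, ∑ i, M i j = b' j)}.ncard := by
  classical
  set t : ℕ := (b 0 + b 1 + 1) / 2 with ht
  have hb'0 : b' 0 = t := by simp [hb']
  have hb'1 : b' 1 = (b 0 + b 1) / 2 := by simp [hb']
  have hb'rest : ∀ j : Fin n, b' j.succ.succ = b j.succ.succ := by
    intro j
    have h1 : (j.succ.succ : Fin (n+2)) ≠ 0 := Fin.succ_ne_zero _
    have h2 : (j.succ.succ : Fin (n+2)) ≠ 1 := by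
      intro h
      have := Fin.succ_injective _ (h.trans (by rfl : (1 : Fin (n+2)) = (0 : Fin (n+1)).succ))
      exact Fin.succ_ne_zero _ this
    simp [hb', h1, h2]
  -- the finset of candidate first columns
  set F : (Fin m → ℕ) → ℕ → Finset (Fin m → ℕ) := fun r c =>
    (Finset.Icc 0 r).filter (fun x => (∑ i, (x i : ℤ)) = (c : ℤ)) with hF
  have hcard : ∀ r c, (F r c).card = cnt m r c := fun _ _ => rfl
  -- choose injections on first columns
  have key : ∀ r : Fin m → ℕ, ∃ ι : (Fin m → ℕ) → (Fin m → ℕ),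
      (∑ i, r i = b 0 + b 1) →
        (∀ x ∈ F r (b 0), ι x ∈ F r t) ∧ Set.InjOn ι ↑(F r (b 0)) := by
    intro r
    by_cases h : ∑ i, r i = b 0 + b 1
    · have hle : (F r (b 0)).card ≤ (F r t).card := by
        rw [hcard, hcard]
        have := cnt_le_center m r (b 0)
        rwa [h, ← ht] at this
      obtain ⟨e⟩ : Nonempty (↥(F r (b 0)) ↪ ↥(F r t)) :=
        Function.Embedding.nonempty_of_card_le (by simpa [Fintype.card_coe] using hle)
      refine ⟨fun x => if hx : x ∈ F r (b 0) then (e ⟨x, hx⟩ : Fin m → ℕ) else x, fun _ => ⟨?_, ?_⟩⟩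
      · intro x hx
        simp only [dif_pos hx]
        exact (e ⟨x, hx⟩).2
      · intro x hx y hy hxy
        simp only [Finset.mem_coe] at hx hy
        simp only [dif_pos hx, dif_pos hy] at hxy
        have := e.injective (Subtype.ext hxy)
        exact congrArg Subtype.val this
    · exact ⟨id, fun h' => absurd h' h⟩
  choose ι hι using key
  -- the global map on matrices
  set Φ : (Fin m → Fin (n + 2) → ℕ) → (Fin m → Fin (n + 2) → ℕ) := fun M i j =>
    if j = 0 then ι (fun i' => M i' 0 + M i' 1) (fun i' => M i' 0) i
    else if j = 1 then
      (M i 0 + M i 1) - ι (fun i' => M i' 0 + M i' 1) (fun i' => M i' 0) i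
    else M i j with hΦ
  -- finiteness of target set
  have hfin : {M : Fin m → Fin (n + 2) → ℕ | (∀ i, ∑ j, M i j = a i) ∧
      (∀ j, ∑ i, M i j = b' j)}.Finite := by
    apply Set.Finite.subset (Set.finite_Icc (0 : Fin m → Fin (n+2) → ℕ) (fun i _ => a i))
    intro M hM
    simp only [Set.mem_Icc, Pi.le_def]
    refine ⟨fun i j => Nat.zero_le _, fun i j => ?_⟩
    rw [← hM.1 i]
    exact Finset.single_le_sum (fun _ _ => Nat.zero_le _) (Finset.mem_univ j)
  apply Set.ncard_le_ncard_of_injOn Φ ?_ ?_ hfin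
  · -- maps to
    rintro M ⟨hrow, hcol⟩
    set r : Fin m → ℕ := fun i => M i 0 + M i 1 with hr
    have hrs : ∑ i, r i = b 0 + b 1 := by
      rw [hr]; rw [Finset.sum_add_distrib, hcol 0, hcol 1]
    have hx : (fun i => M i 0) ∈ F r (b 0) := by
      simp only [hF, Finset.mem_filter, Finset.mem_Icc, Pi.le_def]
      exact ⟨⟨fun i => Nat.zero_le _, fun i => Nat.le_add_right _ _⟩,
        by rw [← Nat.cast_sum, hcol 0]⟩
    obtain ⟨hmap, hinj⟩ := hι r hrs
    have hx' := hmap _ hx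
    simp only [hF, Finset.mem_filter, Finset.mem_Icc, Pi.le_def] at hx'
    obtain ⟨⟨-, hxle⟩, hxsum⟩ := hx'
    have hxs : ∑ i, ι r (fun i => M i 0) i = t := by
      have := hxsum
      rw [← Nat.cast_sum] at this
      exact_mod_cast this
    constructor
    · -- row sums
      intro i
      rw [← hrow i]
      rw [Fin.sum_univ_succ, Fin.sum_univ_succ, Fin.sum_univ_succ, Fin.sum_univ_succ]
      have e0 : Φ M i 0 = ι r (fun i' => M i' 0) i := by simp [hΦ, hr]
      have e1 : Φ M i (0 : Fin (n+1)).succ = r i - ι r (fun i' => M i' 0) i := by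
        simp [hΦ, hr, Fin.succ_ne_zero]
      have erest : ∀ j : Fin n, Φ M i j.succ.succ = M i j.succ.succ := by
        intro j
        have h1 : (j.succ.succ : Fin (n+2)) ≠ 0 := Fin.succ_ne_zero _
        have h2 : (j.succ.succ : Fin (n+2)) ≠ 1 := by
          intro h
          have := Fin.succ_injective _ (h.trans (by rfl : (1 : Fin (n+2)) = (0 : Fin (n+1)).succ))
          exact Fin.succ_ne_zero _ this
        simp [hΦ, h1, h2]
      rw [e0, e1, Finset.sum_congr rfl (fun j _ => erest j)]
      have h1 := hxle i
      have h2 : r i = M i 0 + M i 1 := rfl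
      have h3 : M i (0 : Fin (n+1)).succ = M i 1 := rfl
      omega
    · -- column sums
      intro j
      induction j using Fin.cases with
      | zero =>
        rw [hb'0, ← hxs]
        apply Finset.sum_congr rfl
        intro i _
        simp [hΦ, hr]
      | succ j1 =>
        induction j1 using Fin.cases with
        | zero =>
          have e1 : ∀ i, Φ M i (0 : Fin (n+1)).succ = r i - ι r (fun i' => M i' 0) i := by
            intro i; simp [hΦ, hr, Fin.succ_ne_zero]
          rw [Finset.sum_congr rfl (fun i _ => e1 i),
            Finset.sum_tsub_distrib Finset.univ (fun i _ => hxle i), hrs, hxs,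
            show (b' ((0 : Fin (n+1)).succ) : ℕ) = b' 1 from rfl, hb'1]
          omega
        | succ j2 =>
          rw [hb'rest j2]
          have h1 : (j2.succ.succ : Fin (n+2)) ≠ 0 := Fin.succ_ne_zero _
          have h2 : (j2.succ.succ : Fin (n+2)) ≠ 1 := by
            intro h
            have := Fin.succ_injective _ (h.trans (by rfl : (1 : Fin (n+2)) = (0 : Fin (n+1)).succ))
            exact Fin.succ_ne_zero _ this
          rw [← hcol j2.succ.succ]
          apply Finset.sum_congr rfl
          intro i _
          simp [hΦ, h1, h2]
  · -- injectivity
    rintro M ⟨hrow, hcol⟩ M' ⟨hrow', hcol'⟩ hMM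
    have hrest : ∀ i (j : Fin n), M i j.succ.succ = M' i j.succ.succ := by
      intro i j
      have h1 : (j.succ.succ : Fin (n+2)) ≠ 0 := Fin.succ_ne_zero _
      have h2 : (j.succ.succ : Fin (n+2)) ≠ 1 := by
        intro h
        have := Fin.succ_injective _ (h.trans (by rfl : (1 : Fin (n+2)) = (0 : Fin (n+1)).succ))
        exact Fin.succ_ne_zero _ this
      have := congrFun (congrFun hMM i) j.succ.succ
      simpa [hΦ, h1, h2] using this
    have hrr : ∀ i, M i 0 + M i 1 = M' i 0 + M' i 1 := by
      intro i
      have h1 := hrow i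
      have h2 := hrow' i
      rw [Fin.sum_univ_succ, Fin.sum_univ_succ] at h1 h2
      rw [Finset.sum_congr rfl (fun j _ => hrest i j)] at h1
      have e1 : M i (0 : Fin (n+1)).succ = M i 1 := rfl
      have e2 : M' i (0 : Fin (n+1)).succ = M' i 1 := rfl
      omega
    have hrfun : (fun i => M i 0 + M i 1) = (fun i => M' i 0 + M' i 1) := funext hrr
    set r : Fin m → ℕ := fun i => M i 0 + M i 1 with hr
    have hrs : ∑ i, r i = b 0 + b 1 := by
      rw [hr]; rw [Finset.sum_add_distrib, hcol 0, hcol 1]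
    obtain ⟨hmap, hinj⟩ := hι r hrs
    have hxmem : (fun i => M i 0) ∈ F r (b 0) := by
      simp only [hF, Finset.mem_filter, Finset.mem_Icc, Pi.le_def]
      exact ⟨⟨fun i => Nat.zero_le _, fun i => Nat.le_add_right _ _⟩,
        by rw [← Nat.cast_sum, hcol 0]⟩
    have hxmem' : (fun i => M' i 0) ∈ F r (b 0) := by
      simp only [hF, Finset.mem_filter, Finset.mem_Icc, Pi.le_def, hr]
      refine ⟨⟨fun i => Nat.zero_le _, fun i => by rw [hrr i]; exact Nat.le_add_right _ _⟩,
        by rw [← Nat.cast_sum, hcol' 0]⟩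
    have hcol0 : (fun i => M i 0) = (fun i => M' i 0) := by
      apply hinj hxmem hxmem'
      funext i
      have := congrFun (congrFun hMM i) 0
      simp only [hΦ, if_pos rfl] at this
      rw [← hrfun] at this
      exact this
    have hM0 : ∀ i, M i 0 = M' i 0 := fun i => congrFun hcol0 i
    funext i j
    induction j using Fin.cases with
    | zero => exact hM0 i
    | succ j1 =>
      induction j1 using Fin.cases with
      | zero =>
        have h1 := hrr i
        have h0 := hM0 i
        calc M i (0 : Fin (n+1)).succ = M i 1 := rfl
          _ = M' i 1 := by omega
          _ = M' i (0 : Fin (n+1)).succ := rfl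
      | succ j2 => exact hrest i j2
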